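/- Let d₁, d₂ be nonzero integers, let g = gcd(d₁,d₂) > 0, and let m, n be integers with m·d₁ + n·d₂ = g. Then there exists a ℤ-module isomorphism φ from the quotient of ℤ² by the image of the linear map given by the matrix M = [[d₂, d₁], [0, d₂]] onto (ℤ/gℤ) × (ℤ/(d₂²/g)ℤ) such that φ sends the class of the first standard basis vector (1,0) to (1 mod g, −(m·d₂/g) mod (d₂²/g)) and sends the class of the second standard basis vector (0,1) to (0, 1 mod (d₂²/g)); in particular the class of (0,1) is sent to a generator of the second factor. -/

import Mathlib

/-- There is a `ℤ`-module isomorphism from the cokernel of `M = [[d₂,d₁],[0,d₂]]`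
to `(ℤ/gℤ) × (ℤ/(d₂²/g)ℤ)` sending the class of `(1,0)` to
`(1 mod g, −(m·d₂/g) mod (d₂²/g))` and the class of `(0,1)` to `(0, 1 mod (d₂²/g))`. -/
theorem cokernel_iso_explicit (d₁ d₂ g m n : ℤ)
    (hd₁ : d₁ ≠ 0) (hd₂ : d₂ ≠ 0)
    (hg : g = Int.gcd d₁ d₂) (hgpos : 0 < g)
    (hbez : m * d₁ + n * d₂ = g) :
    ∃ φ : ((Fin 2 → ℤ) ⧸
        LinearMap.range (Matrix.mulVecLin (!![d₂, d₁; 0, d₂] : Matrix (Fin 2) (Fin 2) ℤ)))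
        ≃ₗ[ℤ] ZMod g.toNat × ZMod (d₂ ^ 2 / g).toNat,
      φ (Submodule.Quotient.mk ![1, 0]) =
        ((1 : ZMod g.toNat), ((-(m * d₂ / g) : ℤ) : ZMod (d₂ ^ 2 / g).toNat)) ∧
      φ (Submodule.Quotient.mk ![0, 1]) =
        ((0 : ZMod g.toNat), (1 : ZMod (d₂ ^ 2 / g).toNat)) := by
  have hgne : g ≠ 0 := hgpos.ne'
  obtain ⟨k, hk⟩ : g ∣ d₁ := hg ▸ Int.gcd_dvd_left d₁ d₂
  obtain ⟨e, he⟩ : g ∣ d₂ := hg ▸ Int.gcd_dvd_right d₁ d₂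
  set c : ℤ := -(m * d₂ / g) with hcdef
  have hc : c = -(m * e) := by
    rw [hcdef, he, show m * (g * e) = g * (m * e) by ring, Int.mul_ediv_cancel_left _ hgne]
  have hmk : m * k + n * e = 1 := by
    have : g * (m * k + n * e) = g * 1 := by
      rw [mul_one]; rw [hk, he] at hbez; linarith [hbez]
    exact mul_left_cancel₀ hgne this
  have hD : d₂ ^ 2 / g = g * e ^ 2 := by
    rw [he, show (g * e) ^ 2 = g * (g * e ^ 2) by ring, Int.mul_ediv_cancel_left _ hgne]
  have hG : ((g.toNat : ℤ)) = g := Int.toNat_of_nonneg hgpos.le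
  have hN : (((d₂ ^ 2 / g).toNat : ℤ)) = g * e ^ 2 := by
    rw [← hD]
    exact Int.toNat_of_nonneg (Int.ediv_nonneg (sq_nonneg d₂) hgpos.le)
  -- the linear map
  set f : (Fin 2 → ℤ) →ₗ[ℤ] ZMod g.toNat × ZMod (d₂ ^ 2 / g).toNat :=
    { toFun := fun v => (((v 0 : ℤ) : ZMod g.toNat), ((c * v 0 + v 1 : ℤ) : ZMod (d₂ ^ 2 / g).toNat))
      map_add' := by intro v w; simp [Pi.add_apply]; push_cast; ring
      map_smul' := by
        intro r v
        simp [Pi.smul_apply, Prod.smul_def, zsmul_eq_mul]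
        push_cast; ring } with hfdef
  have hMw : ∀ w : Fin 2 → ℤ,
      (Matrix.mulVecLin (!![d₂, d₁; 0, d₂] : Matrix (Fin 2) (Fin 2) ℤ)) w
        = ![d₂ * w 0 + d₁ * w 1, d₂ * w 1] := by
    intro w
    funext i
    fin_cases i <;>
      simp [Matrix.mulVecLin, Matrix.mulVec, dotProduct, Fin.sum_univ_two]
  have hker : LinearMap.range
      (Matrix.mulVecLin (!![d₂, d₁; 0, d₂] : Matrix (Fin 2) (Fin 2) ℤ)) = LinearMap.ker f := by
    ext v
    constructor
    · rintro ⟨w, rfl⟩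
      rw [hMw w]
      have h1 : (((d₂ * w 0 + d₁ * w 1 : ℤ)) : ZMod g.toNat) = 0 := by
        rw [ZMod.intCast_zmod_eq_zero_iff_dvd, hG]
        exact ⟨e * w 0 + k * w 1, by rw [he, hk]; ring⟩
      have h2 : ((c * (d₂ * w 0 + d₁ * w 1) + d₂ * w 1 : ℤ) : ZMod (d₂ ^ 2 / g).toNat) = 0 := by
        rw [ZMod.intCast_zmod_eq_zero_iff_dvd, hN]
        refine ⟨-(m * w 0) + n * w 1, ?_⟩
        rw [hc, he, hk]
        linear_combination (-(g * e * w 1)) * hmk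
      simp only [LinearMap.mem_ker, hfdef, LinearMap.coe_mk, AddHom.coe_mk]
      simp [Matrix.cons_val_zero, Matrix.cons_val_one, h1, h2]
    · intro hv
      simp only [LinearMap.mem_ker, hfdef, LinearMap.coe_mk, AddHom.coe_mk, Prod.mk_eq_zero] at hv
      obtain ⟨h1, h2⟩ := hv
      rw [ZMod.intCast_zmod_eq_zero_iff_dvd, hG] at h1
      rw [ZMod.intCast_zmod_eq_zero_iff_dvd, hN] at h2
      obtain ⟨s, hs⟩ := h1
      obtain ⟨t, ht⟩ := h2
      have hv1 : v 1 = m * e * g * s + g * e ^ 2 * t := by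
        rw [hc, hs] at ht; linarith [ht]
      refine ⟨![n * s - k * t, m * s + e * t], ?_⟩
      rw [hMw]
      funext i
      fin_cases i
      · show d₂ * (n * s - k * t) + d₁ * (m * s + e * t) = v 0
        linear_combination (n * s - k * t) * he + (m * s + e * t) * hk - hs + (g * s) * hmk
      · show d₂ * (m * s + e * t) = v 1
        linear_combination (m * s + e * t) * he - hv1
  have hsurj : Function.Surjective f := by
    rintro ⟨x, y⟩
    obtain ⟨p, hp⟩ := ZMod.intCast_surjective (n := g.toNat) x
    obtain ⟨q, hq⟩ := ZMod.intCast_surjective (n := (d₂ ^ 2 / g).toNat) y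
    refine ⟨![p, q - c * p], ?_⟩
    simp only [hfdef, LinearMap.coe_mk, AddHom.coe_mk]
    simp [Matrix.cons_val_zero, Matrix.cons_val_one, hp, hq]
  set φ0 := Submodule.liftQ _ f hker.le with hφ0
  have hinj : Function.Injective φ0 := by
    rw [← LinearMap.ker_eq_bot, hφ0, Submodule.ker_liftQ_eq_bot _ _ _ hker.ge]
  have hsurj0 : Function.Surjective φ0 := by
    intro y
    obtain ⟨v, hv⟩ := hsurj y
    exact ⟨Submodule.Quotient.mk v, hv⟩
  refine ⟨LinearEquiv.ofBijective φ0 ⟨hinj, hsurj0⟩, ?_, ?_⟩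
  · show f ![1, 0] = _
    simp only [hfdef, LinearMap.coe_mk, AddHom.coe_mk]
    simp [Matrix.cons_val_zero, Matrix.cons_val_one]
  · show f ![0, 1] = _
    simp only [hfdef, LinearMap.coe_mk, AddHom.coe_mk]
    simp [Matrix.cons_val_zero, Matrix.cons_val_one]
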